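/- Let k ≥ 1 and N ≥ 2 be integers and set n = k + N − 1. Suppose P, H_{N+1}, …, H_{n+1} ∈ ℚ[X_1,…,X_k] satisfy P(e_1,…,e_k) = p_{n+2} and H_r(e_1,…,e_k) = h_r for N+1 ≤ r ≤ n+1, where e_i, p_m, h_r are the elementary symmetric, power sum, and complete homogeneous symmetric polynomials in t_1,…,t_k. Regard these as polynomials with complex coefficients and fix z ∈ ℂ. Let W = (1/(n+2))·P + (−1)^k · z · X_1 ∈ ℂ[X_1,…,X_k]. Then the ideal of ℂ[X_1,…,X_k] generated by ∂W/∂X_1, …, ∂W/∂X_k equals the ideal generated by H_{N+1}, …, H_n and H_{n+1} + (−1)^k z. -/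

import Mathlib

open MvPolynomial

/-- The Landau–Ginzburg potential `W_{k,N} = (1/(n+2))·p_{n+2} + (−1)^k z X_1`,
where `P ∈ ℚ[X_1,…,X_k]` is the polynomial expressing the power sum `p_{n+2}`
in the elementary symmetric polynomials, regarded with complex coefficients. -/
noncomputable def WPot (k n : ℕ) (hk : 1 ≤ k) (P : MvPolynomial (Fin k) ℚ) (z : ℂ) :
    MvPolynomial (Fin k) ℂ :=
  C (((n : ℂ) + 2)⁻¹) * (MvPolynomial.map (algebraMap ℚ ℂ) P)
    + C ((-1 : ℂ) ^ k * z) * X ⟨0, hk⟩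


section Aux

open Finset

variable {σ : Type*} [Fintype σ] [DecidableEq σ]

/-- Elementary symmetric polynomial in the variables of a finset `s`. -/
noncomputable def eS (s : Finset σ) (m : ℕ) : MvPolynomial σ ℚ :=
  ∑ t ∈ s.powersetCard m, ∏ i ∈ t, X i

/-- Complete homogeneous symmetric polynomial in the variables of a finset `s`. -/
noncomputable def hS (s : Finset σ) (r : ℕ) : MvPolynomial σ ℚ :=
  ∑ μ ∈ s.sym r, (μ.1.map X).prod

lemma eS_zero (s : Finset σ) : eS s 0 = 1 := by
  simp [eS]

lemma eS_of_card_lt {s : Finset σ} {m : ℕ} (h : s.card < m) : eS s m = 0 := by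
  rw [eS, powersetCard_eq_empty.2 h, sum_empty]

lemma hS_zero (s : Finset σ) : hS s 0 = 1 := by
  rw [hS, Finset.sym_zero, sum_singleton]; rfl

lemma hS_empty_succ (r : ℕ) : hS (∅ : Finset σ) (r + 1) = 0 := by
  simp [hS, Finset.sym_empty]

lemma eS_insert {a : σ} {s : Finset σ} (h : a ∉ s) (m : ℕ) :
    eS (insert a s) (m + 1) = eS s (m + 1) + X a * eS s m := by
  rw [eS, powersetCard_succ_insert h, sum_union, sum_image]
  · rw [eS, eS, mul_sum]
    congr 1
    refine sum_congr rfl fun t ht => ?_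
    rw [prod_insert fun hat => h ((mem_powersetCard.1 ht).1 hat)]
  · intro t ht u hu htu
    have ht' := (mem_powersetCard.1 ht).1
    have hu' := (mem_powersetCard.1 hu).1
    ext b
    constructor
    · intro hb
      have : b ∈ insert a u := htu ▸ mem_insert_of_mem hb
      rcases mem_insert.1 this with rfl | hb'
      · exact absurd (ht' hb) h
      · exact hb'
    · intro hb
      have : b ∈ insert a t := htu.symm ▸ mem_insert_of_mem hb
      rcases mem_insert.1 this with rfl | hb'
      · exact absurd (hu' hb) h
      · exact hb'
  · rw [Finset.disjoint_right]
    intro t ht hts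
    obtain ⟨u, hu, rfl⟩ := mem_image.1 ht
    exact h ((mem_powersetCard.1 hts).1 (mem_insert_self a u))

lemma hS_insert {a : σ} {s : Finset σ} (h : a ∉ s) (r : ℕ) :
    hS (insert a s) (r + 1) = hS s (r + 1) + X a * hS (insert a s) r := by
  classical
  rw [hS]
  rw [← Finset.sum_filter_add_sum_filter_not ((insert a s).sym (r+1)) (fun μ => a ∈ μ)]
  have h2 : Finset.filter (fun μ => a ∉ μ) ((insert a s).sym (r+1)) = s.sym (r+1) := by
    ext μ
    simp only [mem_filter, mem_sym_iff, Finset.mem_insert]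
    constructor
    · rintro ⟨h1, h2⟩ b hb
      rcases h1 b hb with rfl | hb'
      · exact absurd hb h2
      · exact hb'
    · intro h1
      exact ⟨fun b hb => Or.inr (h1 b hb), fun ha => h (h1 a ha)⟩
  have h1 : Finset.filter (fun μ => a ∈ μ) ((insert a s).sym (r+1))
      = ((insert a s).sym r).image (Sym.cons a) := by
    ext μ
    simp only [mem_filter, mem_image, mem_sym_iff]
    constructor
    · rintro ⟨h1, h2⟩
      refine ⟨μ.erase a h2, fun b hb => h1 b ((Sym.cons_erase h2) ▸ Sym.mem_cons_of_mem hb),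
        Sym.cons_erase h2⟩
    · rintro ⟨ν, hν, rfl⟩
      exact ⟨fun b hb => (Sym.mem_cons.1 hb).elim (fun h => h ▸ mem_insert_self a s)
        (fun h => hν b h), Sym.mem_cons_self a ν⟩
  rw [h1, h2, add_comm, sum_image (fun x _ y _ hxy => (Sym.cons_inj_right a x y).1 hxy)]
  congr 1
  rw [hS, mul_sum]
  refine sum_congr rfl fun ν _ => ?_
  rw [Sym.cons, Multiset.map_cons, Multiset.prod_cons]

lemma orthAux (s : Finset σ) (r : ℕ) :
    ∑ m ∈ Finset.range (r + 1), (-1 : MvPolynomial σ ℚ) ^ m * (eS s m * hS s (r - m))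
      = if r = 0 then 1 else 0 := by
  induction s using Finset.induction_on generalizing r with
  | empty =>
    cases r with
    | zero => simp [eS_zero, hS_zero]
    | succ r =>
      rw [if_neg (Nat.succ_ne_zero r)]
      refine Finset.sum_eq_zero fun m hm => ?_
      cases m with
      | zero => simp [Nat.sub_zero, hS_empty_succ]
      | succ m => rw [eS_of_card_lt (by simp)]; ring
  | @insert a s ha ih =>
    induction r with
    | zero => simp [eS_zero, hS_zero]
    | succ r ihr =>
      rw [if_neg (Nat.succ_ne_zero r)]
      have hsplit : ∀ m ∈ Finset.range (r + 1),
          (-1 : MvPolynomial σ ℚ) ^ m * (eS (insert a s) m * hS (insert a s) (r + 1 - m))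
            = (-1) ^ m * (eS (insert a s) m * hS s (r + 1 - m))
              + X a * ((-1) ^ m * (eS (insert a s) m * hS (insert a s) (r - m))) := by
        intro m hm
        have h1 : r + 1 - m = (r - m) + 1 := by
          have := Finset.mem_range.1 hm; omega
        rw [h1, hS_insert ha]; ring
      calc ∑ m ∈ Finset.range (r + 1 + 1),
            (-1 : MvPolynomial σ ℚ) ^ m * (eS (insert a s) m * hS (insert a s) (r + 1 - m))
          = ∑ m ∈ Finset.range (r + 1),
              (-1 : MvPolynomial σ ℚ) ^ m * (eS (insert a s) m * hS (insert a s) (r + 1 - m))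
            + (-1) ^ (r + 1) * (eS (insert a s) (r + 1) * hS (insert a s) 0) := by
            rw [Finset.sum_range_succ, Nat.sub_self]
        _ = (∑ m ∈ Finset.range (r + 1),
              (-1 : MvPolynomial σ ℚ) ^ m * (eS (insert a s) m * hS s (r + 1 - m))
            + (-1) ^ (r + 1) * (eS (insert a s) (r + 1) * hS s (r + 1 - (r + 1))))
            + X a * (if r = 0 then 1 else 0) := by
            rw [Finset.sum_congr rfl hsplit, Finset.sum_add_distrib, ← Finset.mul_sum, ihr,
              Nat.sub_self, hS_zero, hS_zero]
            ring
        _ = ∑ m ∈ Finset.range (r + 1 + 1),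
              (-1 : MvPolynomial σ ℚ) ^ m * (eS (insert a s) m * hS s (r + 1 - m))
            + X a * (if r = 0 then 1 else 0) := by
            conv_rhs => rw [Finset.sum_range_succ]
        _ = (if r + 1 = 0 then 1 else 0) - X a * (if r = 0 then 1 else 0)
            + X a * (if r = 0 then 1 else 0) := by
            rw [add_left_inj]
            rw [Finset.sum_range_succ']
            have hstep : ∀ m ∈ Finset.range (r + 1),
                (-1 : MvPolynomial σ ℚ) ^ (m + 1) * (eS (insert a s) (m + 1) * hS s (r + 1 - (m + 1)))
                  = (-1) ^ (m + 1) * (eS s (m + 1) * hS s (r + 1 - (m + 1)))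
                    - X a * ((-1) ^ m * (eS s m * hS s (r - m))) := by
              intro m hm
              have h1 : r + 1 - (m + 1) = r - m := by omega
              rw [eS_insert ha, h1]; ring
            rw [Finset.sum_congr rfl hstep, Finset.sum_sub_distrib, ← Finset.mul_sum, ih r]
            have h0 : (-1 : MvPolynomial σ ℚ) ^ 0 * (eS (insert a s) 0 * hS s (r + 1 - 0)) =
                (-1) ^ 0 * (eS s 0 * hS s (r + 1 - 0)) := by rw [eS_zero, eS_zero]
            rw [h0]
            have := ih (r + 1)
            rw [Finset.sum_range_succ'] at this
            rw [sub_add_eq_add_sub, this]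
        _ = 0 := by rw [sub_add_cancel, if_neg (Nat.succ_ne_zero r)]

lemma eS_univ (m : ℕ) : eS (univ : Finset σ) m = esymm σ ℚ m := rfl

lemma hS_univ (r : ℕ) : hS (univ : Finset σ) r = hsymm σ ℚ r := by
  rw [hS, Finset.sym_univ, hsymm]

/-- The key generating identity:
`∑ₘ (-1)^m e_m(x ≠ j) h_{r-m}(x) = x_j ^ r`. -/
lemma genId (j : σ) (r : ℕ) :
    ∑ m ∈ Finset.range (r + 1),
        (-1 : MvPolynomial σ ℚ) ^ m * (eS (univ.erase j) m * hsymm σ ℚ (r - m))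
      = X j ^ r := by
  induction r with
  | zero => simp [eS_zero, hsymm_zero]
  | succ r ih =>
    have hj : j ∉ univ.erase j := notMem_erase j univ
    have hins : insert j (univ.erase j) = (univ : Finset σ) := insert_erase (mem_univ j)
    have hsplit : ∀ m ∈ Finset.range (r + 1),
        (-1 : MvPolynomial σ ℚ) ^ m * (eS (univ.erase j) m * hsymm σ ℚ (r + 1 - m))
          = (-1) ^ m * (eS (univ.erase j) m * hS (univ.erase j) (r + 1 - m))
            + X j * ((-1) ^ m * (eS (univ.erase j) m * hsymm σ ℚ (r - m))) := by
      intro m hm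
      have h1 : r + 1 - m = (r - m) + 1 := by
        have := Finset.mem_range.1 hm; omega
      rw [h1, ← hS_univ, ← hins, hS_insert hj, hins, hS_univ]
      ring
    calc ∑ m ∈ Finset.range (r + 1 + 1),
          (-1 : MvPolynomial σ ℚ) ^ m * (eS (univ.erase j) m * hsymm σ ℚ (r + 1 - m))
        = ∑ m ∈ Finset.range (r + 1),
            (-1 : MvPolynomial σ ℚ) ^ m * (eS (univ.erase j) m * hsymm σ ℚ (r + 1 - m))
          + (-1) ^ (r + 1) * (eS (univ.erase j) (r + 1) * hsymm σ ℚ (r + 1 - (r + 1))) := by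
          rw [Finset.sum_range_succ]
      _ = (∑ m ∈ Finset.range (r + 1),
            (-1 : MvPolynomial σ ℚ) ^ m * (eS (univ.erase j) m * hS (univ.erase j) (r + 1 - m))
          + (-1) ^ (r + 1) * (eS (univ.erase j) (r + 1) * hS (univ.erase j) (r + 1 - (r + 1))))
          + X j * ∑ m ∈ Finset.range (r + 1),
            (-1 : MvPolynomial σ ℚ) ^ m * (eS (univ.erase j) m * hsymm σ ℚ (r - m)) := by
          rw [Finset.sum_congr rfl hsplit, Finset.sum_add_distrib, ← Finset.mul_sum,
            Nat.sub_self, hS_zero, hsymm_zero]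
          ring
      _ = X j ^ (r + 1) := by
          rw [← Finset.sum_range_succ
            (fun m => (-1 : MvPolynomial σ ℚ) ^ m * (eS (univ.erase j) m * hS (univ.erase j) (r + 1 - m))),
            orthAux, ih, if_neg (Nat.succ_ne_zero r)]
          ring

lemma pderiv_prod_X {j : σ} {t : Finset σ} (h : j ∉ t) :
    pderiv j (∏ i ∈ t, X i : MvPolynomial σ ℚ) = 0 := by
  induction t using Finset.induction_on with
  | empty => simp
  | @insert a t ha ih =>
    rw [prod_insert ha, pderiv_mul, ih (fun hj => h (mem_insert_of_mem hj)),
      pderiv_X_of_ne (by rintro rfl; exact h (mem_insert_self _ _))]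
    simp

lemma pderiv_eS_of_not_mem {j : σ} {s : Finset σ} (h : j ∉ s) (m : ℕ) :
    pderiv j (eS s m) = 0 := by
  rw [eS, map_sum]
  refine Finset.sum_eq_zero fun t ht => ?_
  exact pderiv_prod_X fun hj => h ((mem_powersetCard.1 ht).1 hj)

lemma pderiv_esymm (j : σ) (m : ℕ) :
    pderiv j (esymm σ ℚ (m + 1)) = eS (univ.erase j) m := by
  have hj : j ∉ univ.erase j := notMem_erase j univ
  have hins : insert j (univ.erase j) = (univ : Finset σ) := insert_erase (mem_univ j)
  conv_lhs => rw [← eS_univ, ← hins]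
  rw [eS_insert hj, map_add, pderiv_eS_of_not_mem hj, pderiv_mul,
    pderiv_eS_of_not_mem hj, pderiv_X_self]
  ring

lemma pderiv_aeval {τ : Type*} [Fintype τ] [DecidableEq τ] (e : τ → MvPolynomial σ ℚ) (j : σ)
    (P : MvPolynomial τ ℚ) :
    pderiv j (aeval e P) = ∑ i, aeval e (pderiv i P) * pderiv j (e i) := by
  induction P using MvPolynomial.induction_on with
  | C a => simp [algebraMap_eq]
  | add p q hp hq => simp only [map_add, hp, hq, ← Finset.sum_add_distrib, add_mul]
  | mul_X p i hp =>
    rw [map_mul, aeval_X, pderiv_mul, hp]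
    have key : ∀ l : τ, aeval e (pderiv l (p * X i)) * pderiv j (e l)
        = aeval e (pderiv l p) * pderiv j (e l) * e i
          + (if l = i then aeval e p * pderiv j (e i) else 0) := by
      intro l
      rw [pderiv_mul, map_add, map_mul, map_mul, aeval_X]
      by_cases h : l = i
      · subst h; rw [if_pos rfl, pderiv_X_self, map_one]; ring
      · rw [if_neg h, pderiv_X_of_ne (Ne.symm h), map_zero]; ring
    rw [Finset.sum_congr rfl fun l _ => key l, Finset.sum_add_distrib,
      Finset.sum_ite_eq' Finset.univ i (fun _ => aeval e p * pderiv j (e i)),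
      if_pos (mem_univ i), ← Finset.sum_mul]

lemma pderiv_psum (j : σ) (d : ℕ) :
    pderiv j (psum σ ℚ (d + 1)) = ((d : MvPolynomial σ ℚ) + 1) * X j ^ d := by
  rw [psum, map_sum, Finset.sum_eq_single j]
  · rw [pderiv_pow, pderiv_X_self, mul_one, Nat.add_sub_cancel]; push_cast; ring
  · intro l _ hl
    rw [pderiv_pow, pderiv_X_of_ne hl, mul_zero]
  · intro h; exact absurd (mem_univ j) h

section KeyLemma

variable {k : ℕ}

lemma eS_erase_eq_sum (j : Fin k) (i : ℕ) :
    eS (univ.erase j) i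
      = ∑ m ∈ Finset.range (i + 1),
          (-1 : MvPolynomial (Fin k) ℚ) ^ m * X j ^ m * esymm (Fin k) ℚ (i - m) := by
  induction i with
  | zero => simp [eS_zero, esymm_zero]
  | succ i ih =>
    have hj : j ∉ univ.erase j := notMem_erase j univ
    have hins : insert j (univ.erase j) = (univ : Finset (Fin k)) := insert_erase (mem_univ j)
    have hA : esymm (Fin k) ℚ (i + 1) = eS (univ.erase j) (i + 1) + X j * eS (univ.erase j) i := by
      conv_lhs => rw [← eS_univ, ← hins]
      rw [eS_insert hj]
    have h2 : ∑ m ∈ Finset.range (i + 1 + 1),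
          (-1 : MvPolynomial (Fin k) ℚ) ^ m * X j ^ m * esymm (Fin k) ℚ (i + 1 - m)
        = esymm (Fin k) ℚ (i + 1)
          - X j * ∑ m ∈ Finset.range (i + 1),
              (-1 : MvPolynomial (Fin k) ℚ) ^ m * X j ^ m * esymm (Fin k) ℚ (i - m) := by
      rw [Finset.sum_range_succ']
      have point : ∀ m ∈ Finset.range (i + 1),
          (-1 : MvPolynomial (Fin k) ℚ) ^ (m + 1) * X j ^ (m + 1) * esymm (Fin k) ℚ (i + 1 - (m + 1))
            = (-(X j)) * ((-1) ^ m * X j ^ m * esymm (Fin k) ℚ (i - m)) := by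
        intro m _
        rw [Nat.succ_sub_succ]
        ring
      rw [Finset.sum_congr rfl point, ← Finset.mul_sum]
      simp only [pow_zero, one_mul, Nat.sub_zero]
      ring
    rw [h2, ← ih]
    linear_combination -hA

variable (k) in
noncomputable def matM : Matrix (Fin k) (Fin k) (MvPolynomial (Fin k) ℚ) :=
  Matrix.of fun i j => eS (univ.erase j) (i : ℕ)

variable (k) in
noncomputable def matE : Matrix (Fin k) (Fin k) (MvPolynomial (Fin k) ℚ) :=
  Matrix.of fun i m =>
    if (m : ℕ) ≤ (i : ℕ) then (-1) ^ (m : ℕ) * esymm (Fin k) ℚ ((i : ℕ) - m) else 0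

variable (k) in
noncomputable def matV : Matrix (Fin k) (Fin k) (MvPolynomial (Fin k) ℚ) :=
  Matrix.of fun m j => X j ^ (m : ℕ)

lemma matM_eq : matM k = matE k * matV k := by
  ext i j
  rw [Matrix.mul_apply, matM, Matrix.of_apply, eS_erase_eq_sum]
  have h1 : ∀ m : Fin k, matE k i m * matV k m j
      = if (m : ℕ) ∈ Finset.range ((i : ℕ) + 1)
        then (-1 : MvPolynomial (Fin k) ℚ) ^ (m : ℕ) * X j ^ (m : ℕ) * esymm (Fin k) ℚ ((i : ℕ) - m)
        else 0 := by
    intro m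
    rw [matE, matV, Matrix.of_apply, Matrix.of_apply]
    by_cases h : (m : ℕ) ≤ (i : ℕ)
    · rw [if_pos h, if_pos (Finset.mem_range.2 (Nat.lt_succ_of_le h))]; ring
    · rw [if_neg h, if_neg (fun hm => h (Nat.lt_succ_iff.1 (Finset.mem_range.1 hm))), zero_mul]
  rw [Finset.sum_congr rfl fun m _ => h1 m]
  rw [Fin.sum_univ_eq_sum_range (fun m => if m ∈ Finset.range ((i : ℕ) + 1)
    then (-1 : MvPolynomial (Fin k) ℚ) ^ m * X j ^ m * esymm (Fin k) ℚ ((i : ℕ) - m) else 0)]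
  simp only [Finset.sum_ite_mem]
  rw [Finset.inter_eq_right.2 (Finset.range_subset_range.2 i.isLt)]

lemma det_matV_ne_zero (hk : 1 ≤ k) : (matV k).det ≠ 0 := by
  have : matV k = (Matrix.vandermonde fun j : Fin k => (X j : MvPolynomial (Fin k) ℚ)).transpose := rfl
  rw [this, Matrix.det_transpose, Matrix.det_vandermonde]
  refine Finset.prod_ne_zero_iff.2 fun i _ => Finset.prod_ne_zero_iff.2 fun j hj => ?_
  have hij : i ≠ j := ne_of_lt (Finset.mem_Ioi.1 hj)
  exact sub_ne_zero.2 fun h => hij (X_injective h).symm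

lemma det_matM_ne_zero (hk : 1 ≤ k) : (matM k).det ≠ 0 := by
  rw [matM_eq, Matrix.det_mul]
  have hE : (matE k).det = ∏ i : Fin k, (-1 : MvPolynomial (Fin k) ℚ) ^ (i : ℕ) := by
    rw [Matrix.det_of_lowerTriangular (matE k) (fun i m hlt => by
      rw [matE, Matrix.of_apply, if_neg (not_le.2 (show (i : ℕ) < (m : ℕ) from hlt))])]
    refine Finset.prod_congr rfl fun i _ => ?_
    rw [matE, Matrix.of_apply, if_pos le_rfl, Nat.sub_self, esymm_zero, mul_one]
  exact mul_ne_zero (by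
    rw [hE]
    exact Finset.prod_ne_zero_iff.2 fun i _ => pow_ne_zero _ (neg_ne_zero.2 one_ne_zero))
    (det_matV_ne_zero hk)

end KeyLemma

lemma key_identity {k N n : ℕ} (hk : 1 ≤ k) (hN : 2 ≤ N) (hn : n = k + N - 1)
    (P : MvPolynomial (Fin k) ℚ) (H : ℕ → MvPolynomial (Fin k) ℚ)
    (hP : aeval (fun i : Fin k => esymm (Fin k) ℚ ((i : ℕ) + 1)) P = psum (Fin k) ℚ (n + 2))
    (hH : ∀ r : ℕ, N + 1 ≤ r → r ≤ n + 1 →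
        aeval (fun i : Fin k => esymm (Fin k) ℚ ((i : ℕ) + 1)) (H r) = hsymm (Fin k) ℚ r)
    (i : Fin k) :
    pderiv i P = C ((-1 : ℚ) ^ (i : ℕ) * (n + 2)) * H (n + 1 - (i : ℕ)) := by
  set e : Fin k → MvPolynomial (Fin k) ℚ := fun i => esymm (Fin k) ℚ ((i : ℕ) + 1) with he
  have hinj : Function.Injective fun p : MvPolynomial (Fin k) ℚ => aeval e p := by
    intro p q h
    refine esymmAlgHom_injective (R := ℚ) (σ := Fin k) (n := k) (by simp) ?_
    exact Subtype.ext (by rw [esymmAlgHom_apply, esymmAlgHom_apply]; exact h)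
  set A : Fin k → MvPolynomial (Fin k) ℚ := fun l => aeval e (pderiv l P) with hA
  set B : Fin k → MvPolynomial (Fin k) ℚ :=
    fun l => C ((-1 : ℚ) ^ (l : ℕ) * (n + 2)) * hsymm (Fin k) ℚ (n + 1 - (l : ℕ)) with hB
  have hC : ∀ l : Fin k, (C ((-1 : ℚ) ^ (l : ℕ) * (n + 2)) : MvPolynomial (Fin k) ℚ)
      = (-1) ^ (l : ℕ) * ((n : MvPolynomial (Fin k) ℚ) + 2) := by
    intro l
    rw [_root_.map_mul, map_pow, map_neg, _root_.map_one, map_add, map_ofNat,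
      MvPolynomial.C_eq_coe_nat]
  have R1 : ∀ j : Fin k, ∑ l, A l * matM k l j
      = ((n : MvPolynomial (Fin k) ℚ) + 2) * X j ^ (n + 1) := by
    intro j
    have h1 := pderiv_aeval e j P
    rw [hP] at h1
    have h2 : ∀ l : Fin k, pderiv j (e l) = matM k l j := fun l => pderiv_esymm j (l : ℕ)
    rw [Finset.sum_congr rfl (fun l _ => by rw [h2 l])] at h1
    rw [← h1]
    show pderiv j (psum (Fin k) ℚ ((n + 1) + 1)) = _
    rw [pderiv_psum]
    push_cast
    ring
  have hgen : ∀ j : Fin k, ∑ l : Fin k,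
      (-1 : MvPolynomial (Fin k) ℚ) ^ (l : ℕ)
        * (eS (univ.erase j) (l : ℕ) * hsymm (Fin k) ℚ (n + 1 - (l : ℕ)))
      = X j ^ (n + 1) := by
    intro j
    rw [Fin.sum_univ_eq_sum_range (fun m =>
      (-1 : MvPolynomial (Fin k) ℚ) ^ m * (eS (univ.erase j) m * hsymm (Fin k) ℚ (n + 1 - m))),
      ← genId j (n + 1)]
    refine Finset.sum_subset (Finset.range_subset_range.2 (by omega)) fun m _ hm => ?_
    rw [eS_of_card_lt (show (univ.erase j).card < m by
      rw [card_erase_of_mem (mem_univ j), card_univ, Fintype.card_fin]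
      have hkm : ¬ m < k := fun h => hm (Finset.mem_range.2 h)
      omega)]
    ring
  have R2 : ∀ j : Fin k, ∑ l, B l * matM k l j
      = ((n : MvPolynomial (Fin k) ℚ) + 2) * X j ^ (n + 1) := by
    intro j
    rw [← hgen j, Finset.mul_sum]
    refine Finset.sum_congr rfl fun l _ => ?_
    simp only [hB, hC l, matM, Matrix.of_apply]
    ring
  have h0 : ∀ j : Fin k, ∑ l, (A l - B l) * matM k l j = 0 := by
    intro j
    simp only [sub_mul, Finset.sum_sub_distrib, R1 j, R2 j, sub_self]
  have hdet := det_matM_ne_zero hk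
  have hmain : (A i - B i) * (matM k).det = 0 := by
    have step1 : ∑ l, (A l - B l) * (matM k * (matM k).adjugate) l i
        = (A i - B i) * (matM k).det := by
      rw [Matrix.mul_adjugate]
      have : ∀ l : Fin k, (A l - B l) * ((matM k).det • (1 : Matrix (Fin k) (Fin k) _)) l i
          = if l = i then (A l - B l) * (matM k).det else 0 := by
        intro l
        rw [Matrix.smul_apply, Matrix.one_apply]
        by_cases h : l = i
        · rw [if_pos h, if_pos h, smul_eq_mul, mul_one]
        · rw [if_neg h, if_neg h, smul_zero, mul_zero]
      rw [Finset.sum_congr rfl fun l _ => this l,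
        Finset.sum_ite_eq' Finset.univ i (fun l => (A l - B l) * (matM k).det),
        if_pos (mem_univ i)]
    have step2 : ∑ l, (A l - B l) * (matM k * (matM k).adjugate) l i = 0 := by
      simp only [Matrix.mul_apply, Finset.mul_sum]
      rw [Finset.sum_comm]
      refine Finset.sum_eq_zero fun j _ => ?_
      have : ∀ l : Fin k, (A l - B l) * (matM k l j * (matM k).adjugate j i)
          = ((A l - B l) * matM k l j) * (matM k).adjugate j i := fun l => by ring
      rw [Finset.sum_congr rfl fun l _ => this l, ← Finset.sum_mul, h0 j, zero_mul]
    rw [← step1, step2]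
  have hAB : A i = B i := by
    exact sub_eq_zero.1 ((mul_eq_zero.1 hmain).resolve_right hdet)
  apply hinj
  show aeval e (pderiv i P) = aeval e (C ((-1 : ℚ) ^ (i : ℕ) * (n + 2)) * H (n + 1 - (i : ℕ)))
  rw [_root_.map_mul, aeval_C, MvPolynomial.algebraMap_eq,
    hH (n + 1 - (i : ℕ)) (by have := i.isLt; omega) (by omega)]
  exact hAB

end Aux

/-- **Proposition 3.3 of the paper.**  With `n = k + N − 1`, if `P` expresses the
power sum `p_{n+2}` and `H r` expresses the complete homogeneous symmetric
polynomial `h_r` (for `N+1 ≤ r ≤ n+1`) in terms of the elementary symmetric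
polynomials, then for each `z ∈ ℂ` the Jacobian ideal of
`W = (1/(n+2))·P + (−1)^k z X_1` in `ℂ[X_1,…,X_k]` equals the ideal generated by
`H_{N+1},…,H_n` and `H_{n+1} + (−1)^k z`. -/

theorem jacobian_ideal_eq_quantum_ideal (k N n : ℕ) (hk : 1 ≤ k) (hN : 2 ≤ N)
    (hn : n = k + N - 1)
    (P : MvPolynomial (Fin k) ℚ) (H : ℕ → MvPolynomial (Fin k) ℚ)
    (hP : aeval (fun i : Fin k => esymm (Fin k) ℚ ((i : ℕ) + 1)) P
        = psum (Fin k) ℚ (n + 2))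
    (hH : ∀ r : ℕ, N + 1 ≤ r → r ≤ n + 1 →
        aeval (fun i : Fin k => esymm (Fin k) ℚ ((i : ℕ) + 1)) (H r)
          = hsymm (Fin k) ℚ r)
    (z : ℂ) :
    Ideal.span (Set.range fun i : Fin k => pderiv i (WPot k n hk P z))
      = Ideal.span
          (((fun r : ℕ => MvPolynomial.map (algebraMap ℚ ℂ) (H r)) '' Set.Icc (N + 1) n)
            ∪ {MvPolynomial.map (algebraMap ℚ ℂ) (H (n + 1)) + C ((-1 : ℂ) ^ k * z)}) := by
  set Φ : MvPolynomial (Fin k) ℚ → MvPolynomial (Fin k) ℂ :=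
    fun p => MvPolynomial.map (algebraMap ℚ ℂ) p with hΦ
  set g : Fin k → MvPolynomial (Fin k) ℂ := fun i =>
    Φ (H (n + 1 - (i : ℕ))) + if i = ⟨0, hk⟩ then C ((-1 : ℂ) ^ k * z) else 0 with hg
  have hn2 : ((n : ℂ) + 2) ≠ 0 := by
    have h1 : ((n + 2 : ℕ) : ℂ) ≠ 0 := Nat.cast_ne_zero.2 (by omega)
    push_cast at h1
    exact h1
  have hcoef : ∀ i : Fin k, (C (((n : ℂ) + 2)⁻¹) : MvPolynomial (Fin k) ℂ)
      * (C ((-1 : ℂ) ^ (i : ℕ) * ((n : ℂ) + 2)) * Φ (H (n + 1 - (i : ℕ))))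
      = C ((-1 : ℂ) ^ (i : ℕ)) * Φ (H (n + 1 - (i : ℕ))) := by
    intro i
    rw [← mul_assoc, ← C_mul]
    congr 2
    field_simp
  have hW : ∀ i : Fin k, pderiv i (WPot k n hk P z) = C ((-1 : ℂ) ^ (i : ℕ)) * g i := by
    intro i
    rw [WPot, map_add, pderiv_C_mul, pderiv_C_mul, pderiv_map,
      key_identity hk hN hn P H hP hH i]
    have hmapC : MvPolynomial.map (algebraMap ℚ ℂ)
        (C ((-1 : ℚ) ^ (i : ℕ) * (n + 2)) * H (n + 1 - (i : ℕ)))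
        = C ((-1 : ℂ) ^ (i : ℕ) * ((n : ℂ) + 2)) * Φ (H (n + 1 - (i : ℕ))) := by
      rw [_root_.map_mul, map_C]
      congr 2
      push_cast
      norm_num
    rw [hmapC]
    by_cases h0 : i = ⟨0, hk⟩
    · subst h0
      simp only [hg, if_pos rfl, pderiv_X_self, mul_one, if_true]
      rw [hcoef ⟨0, hk⟩, show ((⟨0, hk⟩ : Fin k) : ℕ) = 0 from rfl, pow_zero, C_1,
        one_mul, one_mul]
    · simp only [hg, if_neg h0, add_zero]
      rw [pderiv_X_of_ne (fun hX => h0 hX.symm), mul_zero, add_zero, hcoef i]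
  have hspan1 : Ideal.span (Set.range fun i : Fin k => pderiv i (WPot k n hk P z))
      = Ideal.span (Set.range g) := by
    apply le_antisymm
    · rw [Ideal.span_le]
      rintro _ ⟨i, rfl⟩
      simp only [hW i]
      exact Ideal.mul_mem_left _ _ (Ideal.subset_span ⟨i, rfl⟩)
    · rw [Ideal.span_le]
      rintro _ ⟨i, rfl⟩
      have hsq : (C ((-1 : ℂ) ^ (i : ℕ)) : MvPolynomial (Fin k) ℂ)
          * C ((-1 : ℂ) ^ (i : ℕ)) = 1 := by
        rw [← C_mul, ← pow_add]
        rw [Even.neg_one_pow ⟨(i : ℕ), rfl⟩, map_one]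
      have : g i = C ((-1 : ℂ) ^ (i : ℕ)) * pderiv i (WPot k n hk P z) := by
        rw [hW i, ← mul_assoc, hsq, one_mul]
      simp only [this]
      exact Ideal.mul_mem_left _ _ (Ideal.subset_span ⟨i, rfl⟩)
  have hset : Set.range g
      = ((fun r : ℕ => MvPolynomial.map (algebraMap ℚ ℂ) (H r)) '' Set.Icc (N + 1) n)
        ∪ {MvPolynomial.map (algebraMap ℚ ℂ) (H (n + 1)) + C ((-1 : ℂ) ^ k * z)} := by
    ext p
    constructor
    · rintro ⟨i, rfl⟩
      by_cases h0 : i = ⟨0, hk⟩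
      · right
        subst h0
        simp only [hg, if_pos rfl]
        show Φ (H (n + 1 - 0)) + C ((-1 : ℂ) ^ k * z) ∈ _
        rw [Nat.sub_zero]
        rfl
      · left
        have hi0 : (i : ℕ) ≠ 0 := fun h => h0 (Fin.ext h)
        have hilt : (i : ℕ) < k := i.isLt
        refine ⟨n + 1 - (i : ℕ), ⟨by omega, by omega⟩, ?_⟩
        simp only [hg, if_neg h0, add_zero]
        rfl
    · rintro (⟨r, hr, rfl⟩ | hp)
      · have hrk : n + 1 - r < k := by
          rcases hr with ⟨hr1, hr2⟩
          omega
        refine ⟨⟨n + 1 - r, hrk⟩, ?_⟩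
        have hval : n + 1 - ((⟨n + 1 - r, hrk⟩ : Fin k) : ℕ) = r := by
          show n + 1 - (n + 1 - r) = r
          rcases hr with ⟨hr1, hr2⟩
          omega
        have hne : (⟨n + 1 - r, hrk⟩ : Fin k) ≠ ⟨0, hk⟩ := by
          intro h
          have h2 : n + 1 - r = 0 := Fin.mk.inj_iff.1 h
          rcases hr with ⟨hr1, hr2⟩
          omega
        simp only [hg, if_neg hne, add_zero, hval]
        rfl
      · rcases Set.mem_singleton_iff.1 hp with rfl
        refine ⟨⟨0, hk⟩, ?_⟩
        simp only [hg, if_pos rfl]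
        show Φ (H (n + 1 - 0)) + C ((-1 : ℂ) ^ k * z) = _
        rw [Nat.sub_zero]
  rw [hspan1, hset]
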